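/- Harary's balance theorem: a signed simple graph G_σ is balanced if and only if its vertex set can be partitioned into two (possibly empty) classes V₁, V₂ such that an edge is negative if and only if its endpoints lie in distinct classes. -/

import Mathlib

open Classical Set

structure SignedGraph (V E : Type*) where
  ends : E → V × V
  sign : E → Bool

namespace SignedGraph

variable {V E : Type*} (G : SignedGraph V E)

def touches (e : E) (v : V) : Prop := (G.ends e).1 = v ∨ (G.ends e).2 = v

def verts (X : Set E) : Set V := {v | ∃ e ∈ X, G.touches e v}

noncomputable def deg (X : Set E) (v : V) : ℕ :=
  ∑ᶠ e ∈ X, ((if (G.ends e).1 = v then 1 else 0) + (if (G.ends e).2 = v then 1 else 0))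

def adjIn (X : Set E) (u v : V) : Prop :=
  ∃ e ∈ X, G.ends e = (u, v) ∨ G.ends e = (v, u)

def ConnSet (X : Set E) : Prop :=
  ∀ u ∈ G.verts X, ∀ v ∈ G.verts X, Relation.EqvGen (G.adjIn X) u v

def IsCycle (C : Set E) : Prop :=
  C.Nonempty ∧ G.ConnSet C ∧ ∀ v ∈ G.verts C, G.deg C v = 2

noncomputable def negCount (C : Set E) : ℕ := {e ∈ C | G.sign e = false}.ncard

def IsBalancedCycle (C : Set E) : Prop := G.IsCycle C ∧ Even (G.negCount C)

def IsUnbalancedCycle (C : Set E) : Prop := G.IsCycle C ∧ ¬ Even (G.negCount C)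

def IsPath (P : Set E) : Prop :=
  P.Nonempty ∧ G.ConnSet P ∧ (∀ e ∈ P, (G.ends e).1 ≠ (G.ends e).2) ∧
    (∀ v ∈ G.verts P, G.deg P v ≤ 2) ∧
    {v ∈ G.verts P | G.deg P v = 1}.ncard = 2

def IsBowtie (B : Set E) : Prop :=
  (∃ C₁ C₂, G.IsUnbalancedCycle C₁ ∧ G.IsUnbalancedCycle C₂ ∧ B = C₁ ∪ C₂ ∧
      ∃ v, G.verts C₁ ∩ G.verts C₂ = {v}) ∨
  (∃ C₁ C₂ P, G.IsUnbalancedCycle C₁ ∧ G.IsUnbalancedCycle C₂ ∧ G.IsPath P ∧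
      Disjoint (G.verts C₁) (G.verts C₂) ∧ B = C₁ ∪ C₂ ∪ P ∧
      (∃ v₁, G.verts P ∩ G.verts C₁ = {v₁} ∧ G.deg P v₁ = 1) ∧
      (∃ v₂, G.verts P ∩ G.verts C₂ = {v₂} ∧ G.deg P v₂ = 1) ∧
      Disjoint P C₁ ∧ Disjoint P C₂)

def comp (X : Set E) (v : V) : Set V := {w | Relation.EqvGen (G.adjIn X) v w}

noncomputable def numComponents (X : Set E) : ℕ := {K | ∃ v, K = G.comp X v}.ncard

def BalancedComponent (X : Set E) (K : Set V) : Prop :=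
  (∃ v, K = G.comp X v) ∧ ∀ C ⊆ X, G.verts C ⊆ K → G.IsCycle C → Even (G.negCount C)

noncomputable def numBalancedComponents (X : Set E) : ℕ := {K | G.BalancedComponent X K}.ncard

def Balanced : Prop := ∀ C, G.IsCycle C → Even (G.negCount C)

def Connected : Prop := ∀ u v : V, Relation.EqvGen (G.adjIn Set.univ) u v

noncomputable def incCol (K : Type*) [Field K] (e : E) : V → K := fun v =>
  (if (G.ends e).1 = v then 1 else 0) +
    (if (G.ends e).2 = v then (if G.sign e then -1 else 1) else 0)

noncomputable def incMatrix (K : Type*) [Field K] : Matrix V E K := fun v e => G.incCol K e v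

noncomputable def code (K : Type*) [Field K] : Submodule K (E → K) :=
  Submodule.span K (Set.range fun v => fun e => G.incCol K e v)

end SignedGraph

namespace SignedGraph

variable {V E : Type*} (G : SignedGraph V E)

noncomputable def other (e : E) (u : V) : V :=
  if (G.ends e).1 = u then (G.ends e).2 else (G.ends e).1

def WalkAt : V → List E → Prop
  | _, [] => True
  | u, e :: es => G.touches e u ∧ WalkAt (G.other e u) es

noncomputable def endv : V → List E → V
  | u, [] => u
  | u, e :: es => endv (G.other e u) es

noncomputable def trace : V → List E → List V
  | u, [] => [u]
  | u, e :: es => u :: trace (G.other e u) es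

def npar (es : List E) : ℕ := es.countP (fun e => !G.sign e)

variable {G}
variable {e : E} {u v w : V} {es fs : List E}

lemma ends_or (h : G.touches e u) :
    G.ends e = (u, G.other e u) ∨ G.ends e = (G.other e u, u) := by
  unfold other
  rcases h with h | h
  · left; simp [h, Prod.ext_iff]
  · by_cases h1 : (G.ends e).1 = u
    · left; simp [h1, Prod.ext_iff]
    · right; simp [h1, h, Prod.ext_iff]

lemma touches_other (h : G.touches e u) : G.touches e (G.other e u) := by
  rcases ends_or h with h2 | h2 <;> unfold touches <;> rw [h2] <;> simp

variable (hloop : ∀ e : E, (G.ends e).1 ≠ (G.ends e).2)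
include hloop

lemma other_ne (h : G.touches e u) : G.other e u ≠ u := by
  rcases ends_or h with h2 | h2 <;> intro hh <;> apply hloop e <;> rw [h2] <;> simp [hh]

lemma other_other (h : G.touches e u) : G.other e (G.other e u) = u := by
  have hne := other_ne hloop h
  show (if (G.ends e).1 = G.other e u then (G.ends e).2 else (G.ends e).1) = u
  rcases ends_or h with h2 | h2 <;> rw [h2]
  · exact if_neg (fun q => hne q.symm)
  · exact if_pos rfl

omit hloop in
lemma touches_iff (h : G.touches e u) : G.touches e w ↔ w = u ∨ w = G.other e u := by
  rcases ends_or h with h2 | h2 <;> unfold touches <;> rw [h2] <;> simp <;> tauto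

omit hloop in
lemma walkAt_append : G.WalkAt u (es ++ fs) ↔ G.WalkAt u es ∧ G.WalkAt (G.endv u es) fs := by
  induction es generalizing u with
  | nil => simp [WalkAt, endv]
  | cons e t ih => simp [WalkAt, endv, ih, and_assoc]

omit hloop in
lemma endv_append : G.endv u (es ++ fs) = G.endv (G.endv u es) fs := by
  induction es generalizing u with
  | nil => rfl
  | cons e t ih => simp [endv, ih]

omit hloop in
lemma npar_append : G.npar (es ++ fs) = G.npar es + G.npar fs := List.countP_append

omit hloop in
lemma npar_reverse : G.npar es.reverse = G.npar es := List.countP_reverse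

lemma walkAt_reverse (h : G.WalkAt u es) :
    G.WalkAt (G.endv u es) es.reverse ∧ G.endv (G.endv u es) es.reverse = u := by
  induction es generalizing u with
  | nil => exact ⟨trivial, rfl⟩
  | cons e t ih =>
    obtain ⟨ht, hw⟩ := h
    obtain ⟨ih1, ih2⟩ := ih hw
    have he1 : G.endv u (e :: t) = G.endv (G.other e u) t := rfl
    constructor
    · rw [List.reverse_cons, he1, walkAt_append]
      exact ⟨ih1, by rw [ih2]; exact ⟨touches_other ht, trivial⟩⟩
    · rw [List.reverse_cons, he1, endv_append, ih2]
      show G.endv (G.other e (G.other e u)) [] = u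
      rw [other_other hloop ht]; rfl

omit hloop in
lemma length_trace : (G.trace u es).length = es.length + 1 := by
  induction es generalizing u with
  | nil => rfl
  | cons e t ih => simp [trace, ih]

omit hloop in
lemma trace_ne_nil : G.trace u es ≠ [] := by
  cases es <;> simp [trace]

omit hloop in
lemma trace_getElem (i : ℕ) (h : i < (G.trace u es).length) :
    (G.trace u es)[i] = G.endv u (es.take i) := by
  induction es generalizing u i with
  | nil =>
    have : i = 0 := by simp [trace] at h; omega
    subst this; rfl
  | cons e t ih =>
    cases i with
    | zero => rfl
    | succ j =>
      have hlen : j < (G.trace (G.other e u) t).length := by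
        simp [trace, length_trace] at h ⊢; omega
      calc (G.trace u (e :: t))[j+1]'h = (G.trace (G.other e u) t)[j]'hlen := by simp [trace]
        _ = G.endv (G.other e u) (t.take j) := ih _ hlen
        _ = G.endv u ((e :: t).take (j+1)) := rfl

omit hloop in
lemma mem_trace_of_touches (hW : G.WalkAt u es) (he : e ∈ es) (ht : G.touches e w) :
    w ∈ G.trace u es := by
  induction es generalizing u with
  | nil => simp at he
  | cons f t ih =>
    obtain ⟨h1, h2⟩ := hW
    rcases List.mem_cons.1 he with rfl | he'
    · rcases (touches_iff h1).1 ht with rfl | rfl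
      · exact List.mem_cons_self
      · exact List.mem_cons_of_mem _ (by cases t <;> exact List.mem_cons_self)
    · exact List.mem_cons_of_mem _ (ih h2 he')

omit hloop in
lemma reach_trace {C : Set E} (hW : G.WalkAt u es) (hC : ∀ e ∈ es, e ∈ C)
    (hw : w ∈ G.trace u es) : Relation.EqvGen (G.adjIn C) u w := by
  induction es generalizing u with
  | nil =>
    simp [trace] at hw; subst hw; exact Relation.EqvGen.refl _
  | cons f t ih =>
    obtain ⟨h1, h2⟩ := hW
    rcases List.mem_cons.1 hw with rfl | hw'
    · exact Relation.EqvGen.refl _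
    · have step : G.adjIn C u (G.other f u) :=
        ⟨f, hC f (List.mem_cons_self), by rcases ends_or h1 with h3 | h3 <;> [left; right] <;> exact h3⟩
      exact Relation.EqvGen.trans _ _ _ (Relation.EqvGen.rel _ _ step)
        (ih h2 (fun e he => hC e (List.mem_cons_of_mem _ he)) hw')

lemma countP_touches (hW : G.WalkAt u es) :
    es.countP (fun e => decide (G.touches e w)) =
      (G.trace u es).dropLast.count w + (G.trace u es).tail.count w := by
  induction es generalizing u with
  | nil => simp [trace]
  | cons f t ih =>
    obtain ⟨h1, h2⟩ := hW
    have hT : G.trace u (f :: t) = u :: G.trace (G.other f u) t := rfl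
    rw [List.countP_cons, ih h2, hT]
    have hne : G.other f u ≠ u := other_ne hloop h1
    have hhead : (G.trace (G.other f u) t).head trace_ne_nil = G.other f u := by
      cases t <;> rfl
    have htail : (u :: G.trace (G.other f u) t).tail = G.trace (G.other f u) t := rfl
    have hdrop : (u :: G.trace (G.other f u) t).dropLast = u :: (G.trace (G.other f u) t).dropLast := by
      cases ht : G.trace (G.other f u) t with
      | nil => exact absurd ht trace_ne_nil
      | cons a l => rfl
    rw [htail, hdrop, List.count_cons]
    have hcnt : (G.trace (G.other f u) t).count w =
        (G.trace (G.other f u) t).tail.count w + (if G.other f u = w then 1 else 0) := by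
      conv_lhs => rw [← List.cons_head_tail (trace_ne_nil), hhead]
      simp [List.count_cons]
    have htw : G.touches f w ↔ w = u ∨ w = G.other f u := touches_iff h1
    have hdec : (if decide (G.touches f w) = true then 1 else 0) =
        (if u = w then 1 else 0) + (if G.other f u = w then 1 else 0) := by
      by_cases hw1 : u = w <;> by_cases hw2 : G.other f u = w
      · exact absurd (hw2.trans hw1.symm) hne
      · have hx : G.touches f w := htw.2 (Or.inl hw1.symm)
        rw [if_pos (decide_eq_true hx), if_pos hw1, if_neg hw2]
      · have hx : G.touches f w := htw.2 (Or.inr hw2.symm)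
        rw [if_pos (decide_eq_true hx), if_neg hw1, if_pos hw2]
      · have hx : ¬ G.touches f w := fun hq => by
          rcases htw.1 hq with rfl | rfl
          · exact hw1 rfl
          · exact hw2 rfl
        rw [if_neg (by simpa using hx), if_neg hw1, if_neg hw2]
    rw [hcnt, hdec]
    simp only [List.count_cons, beq_iff_eq]
    omega

omit hloop in
lemma list_sum_countP (p : E → Bool) (l : List E) :
    (l.map (fun e => if p e then (1:ℕ) else 0)).sum = l.countP p := by
  induction l with
  | nil => rfl
  | cons a t ih => simp [List.countP_cons, ih]; omega

lemma cycle_of_walk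
    (hsimple : ∀ e f : E, (G.ends e = G.ends f ∨ G.ends e = Prod.swap (G.ends f)) → e = f)
    (hW : G.WalkAt u es) (hcl : G.endv u es = u) (hn3 : 3 ≤ es.length)
    (hinj : ∀ i j, i < j → j ≤ es.length → ¬(i = 0 ∧ j = es.length) →
      G.endv u (es.take i) ≠ G.endv u (es.take j)) :
    G.IsCycle {e | e ∈ es} ∧ G.negCount {e | e ∈ es} = G.npar es := by
  classical
  set n := es.length with hn
  have hn0 : 0 < n := by omega
  have hstep : ∀ i, (hi : i < n) → G.touches es[i] (G.endv u (es.take i)) ∧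
      G.other es[i] (G.endv u (es.take i)) = G.endv u (es.take (i+1)) := by
    intro i hi
    have hsplit : G.WalkAt (G.endv u (es.take i)) (es.drop i) := by
      have h2 := (walkAt_append (G := G) (u := u) (es := es.take i) (fs := es.drop i)).1
      rw [List.take_append_drop] at h2
      exact (h2 hW).2
    rw [List.drop_eq_getElem_cons hi] at hsplit
    refine ⟨hsplit.1, ?_⟩
    have htk : es.take (i+1) = es.take i ++ [es[i]] := by
      rw [← List.take_concat_get hi, List.concat_eq_append]
    rw [htk, endv_append]
    simp [endv]
  have hor : ∀ i, (hi : i < n) →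
      G.ends es[i] = (G.endv u (es.take i), G.endv u (es.take (i+1)))
      ∨ G.ends es[i] = (G.endv u (es.take (i+1)), G.endv u (es.take i)) := by
    intro i hi
    have h := ends_or (hstep i hi).1
    rw [(hstep i hi).2] at h
    exact h
  have hv0 : G.endv u (es.take n) = G.endv u (es.take 0) := by
    rw [hn, List.take_length]
    simpa [endv] using hcl
  have hkey : ∀ i j, (hij : i < j) → (hj : j < n) → es[i]'(by omega) ≠ es[j] := by
    intro i j hij hj heq
    have hi : i < n := by omega
    rcases hor i hi with h1 | h1 <;> rcases hor j hj with h2 | h2 <;>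
      rw [heq, h2, Prod.mk.injEq] at h1
    · exact hinj i j hij (by omega) (by omega) h1.1.symm
    · -- h1.1 : v (j+1) = v i, h1.2 : v j = v (i+1)
      by_cases hc : i = 0 ∧ j + 1 = n
      · obtain ⟨rfl, hjn⟩ := hc
        have h1n : (1:ℕ) < n - 1 := by omega
        exact hinj 1 (n-1) h1n (by omega) (by omega)
          (by rw [show n - 1 = j by omega]; exact h1.2.symm)
      · exact hinj i (j+1) (by omega) (by omega) hc h1.1.symm
    · -- h1.1 : v j = v (i+1), h1.2 : v (j+1) = v i
      by_cases hc : i = 0 ∧ j + 1 = n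
      · obtain ⟨rfl, hjn⟩ := hc
        have h1n : (1:ℕ) < n - 1 := by omega
        exact hinj 1 (n-1) h1n (by omega) (by omega)
          (by rw [show n - 1 = j by omega]; exact h1.1.symm)
      · exact hinj i (j+1) (by omega) (by omega) hc h1.2.symm
    · exact hinj i j hij (by omega) (by omega) h1.2.symm
  have hnodup : es.Nodup := by
    rw [List.nodup_iff_injective_get]
    rintro ⟨i, hi⟩ ⟨j, hj⟩ hij
    rcases lt_trichotomy i j with h | h | h
    · exact absurd hij (hkey i j h hj)
    · exact Fin.ext h
    · exact absurd hij.symm (hkey j i h hi)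
  have hvinj : ∀ i j, i < j → j ≤ n → ¬(i = 0 ∧ j = n) →
      G.endv u (es.take i) ≠ G.endv u (es.take j) := hinj
  -- trace facts
  have hPlen : (G.trace u es).length = n + 1 := length_trace
  have hPd : (G.trace u es).dropLast.length = n := by
    rw [List.length_dropLast, hPlen]; omega
  have hPt : (G.trace u es).tail.length = n := by
    rw [List.length_tail, hPlen]; omega
  have hPdg : ∀ i, (h : i < n) → (G.trace u es).dropLast[i]'(by omega) = G.endv u (es.take i) := by
    intro i h
    rw [List.getElem_dropLast, trace_getElem]
  have hPtg : ∀ i, (h : i < n) → (G.trace u es).tail[i]'(by omega) = G.endv u (es.take (i+1)) := by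
    intro i h
    rw [List.getElem_tail, trace_getElem]
  have hdnodup : (G.trace u es).dropLast.Nodup := by
    rw [List.nodup_iff_injective_get]
    rintro ⟨i, hi⟩ ⟨j, hj⟩ hij
    rw [hPd] at hi hj
    have hval : G.endv u (es.take i) = G.endv u (es.take j) := by
      rw [← hPdg i hi, ← hPdg j hj]; exact hij
    rcases lt_trichotomy i j with h | h | h
    · exact absurd hval (hvinj i j h (by omega) (by omega))
    · exact Fin.ext h
    · exact absurd hval.symm (hvinj j i h (by omega) (by omega))
  have htnodup : (G.trace u es).tail.Nodup := by
    rw [List.nodup_iff_injective_get]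
    rintro ⟨i, hi⟩ ⟨j, hj⟩ hij
    rw [hPt] at hi hj
    have hval : G.endv u (es.take (i+1)) = G.endv u (es.take (j+1)) := by
      rw [← hPtg i hi, ← hPtg j hj]; exact hij
    rcases lt_trichotomy i j with h | h | h
    · exact absurd hval (hvinj (i+1) (j+1) (by omega) (by omega) (by omega))
    · exact Fin.ext h
    · exact absurd hval.symm (hvinj (j+1) (i+1) (by omega) (by omega) (by omega))
  have hverts : ∀ w, w ∈ G.verts {e | e ∈ es} ↔ w ∈ G.trace u es := by
    intro w
    constructor
    · rintro ⟨e, he, ht⟩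
      exact mem_trace_of_touches hW he ht
    · intro hw
      rw [List.mem_iff_getElem] at hw
      obtain ⟨k, hk, rfl⟩ := hw
      rw [hPlen] at hk
      by_cases hkn : k < n
      · exact ⟨es[k], by simp, by rw [trace_getElem]; exact (hstep k hkn).1⟩
      · have hkeq : k = n := by omega
        subst hkeq
        refine ⟨es[0]'hn0, by simp, ?_⟩
        rw [trace_getElem, hv0]
        exact (hstep 0 hn0).1
  have hdeg : ∀ w, G.deg {e | e ∈ es} w = es.countP (fun e => decide (G.touches e w)) := by
    intro w
    have hset : ({e | e ∈ es} : Set E) = (↑es.toFinset : Set E) := by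
      ext e; simp
    have hpt : ∀ e : E,
        ((if (G.ends e).1 = w then 1 else 0) + (if (G.ends e).2 = w then 1 else 0) : ℕ) =
          (if decide (G.touches e w) then 1 else 0) := by
      intro e
      by_cases h1 : (G.ends e).1 = w <;> by_cases h2 : (G.ends e).2 = w
      · exact absurd (h1.trans h2.symm) (hloop e)
      · simp [touches, h1, h2]
      · simp [touches, h1, h2]
      · simp [touches, h1, h2]
    show (∑ᶠ e ∈ ({e | e ∈ es} : Set E),
        ((if (G.ends e).1 = w then 1 else 0) + (if (G.ends e).2 = w then 1 else 0))) = _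
    rw [hset, finsum_mem_coe_finset]
    rw [Finset.sum_congr rfl (fun e _ => hpt e)]
    rw [List.sum_toFinset _ hnodup, list_sum_countP]
  have hvmem : ∀ w ∈ G.trace u es, w ∈ (G.trace u es).dropLast ∧ w ∈ (G.trace u es).tail := by
    intro w hw
    rw [List.mem_iff_getElem] at hw
    obtain ⟨k, hk, rfl⟩ := hw
    rw [hPlen] at hk
    constructor
    · by_cases hkn : k < n
      · have heq : (G.trace u es)[k]'(by omega) = (G.trace u es).dropLast[k]'(by omega) := by
          rw [hPdg k hkn, trace_getElem]
        rw [heq]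
        exact List.getElem_mem _
      · have hkeq : k = n := by omega
        subst hkeq
        have heq : (G.trace u es)[n]'(by omega) = (G.trace u es).dropLast[0]'(by omega) := by
          rw [hPdg 0 hn0, trace_getElem]
          exact hv0
        rw [heq]
        exact List.getElem_mem _
    · by_cases hk0 : k = 0
      · subst hk0
        have heq : (G.trace u es)[0]'(by omega) = (G.trace u es).tail[n-1]'(by omega) := by
          rw [hPtg (n-1) (by omega), trace_getElem, show n - 1 + 1 = n by omega]
          exact hv0.symm
        rw [heq]
        exact List.getElem_mem _
      · have heq : (G.trace u es)[k]'(by omega) = (G.trace u es).tail[k-1]'(by omega) := by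
          rw [hPtg (k-1) (by omega), trace_getElem, show k - 1 + 1 = k by omega]
        rw [heq]
        exact List.getElem_mem _
  refine ⟨⟨⟨es[0]'hn0, by simp⟩, ?_, ?_⟩, ?_⟩
  · intro a ha b hb
    have hra := reach_trace (C := {e | e ∈ es}) hW (fun e he => he) ((hverts a).1 ha)
    have hrb := reach_trace (C := {e | e ∈ es}) hW (fun e he => he) ((hverts b).1 hb)
    exact Relation.EqvGen.trans _ _ _ (Relation.EqvGen.symm _ _ hra) hrb
  · intro w hw
    rw [hdeg, countP_touches hloop hW]
    obtain ⟨h1, h2⟩ := hvmem w ((hverts w).1 hw)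
    rw [List.count_eq_one_of_mem hdnodup h1, List.count_eq_one_of_mem htnodup h2]
  · have hfs : {e ∈ {e | e ∈ es} | G.sign e = false} =
        (↑((es.filter (fun e => !G.sign e)).toFinset) : Set E) := by
      ext e
      simp [List.mem_filter]
    rw [negCount, hfs, Set.ncard_coe_finset,
      List.toFinset_card_of_nodup (hnodup.filter _), ← List.countP_eq_length_filter]
    rfl

lemma extract
    (hsimple : ∀ e f : E, (G.ends e = G.ends f ∨ G.ends e = Prod.swap (G.ends f)) → e = f) :
    ∀ N (es : List E) (u : V), es.length ≤ N → es ≠ [] → G.WalkAt u es → G.endv u es = u →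
      ¬ Even (G.npar es) → ∃ C : Set E, G.IsCycle C ∧ ¬ Even (G.negCount C) := by
  intro N
  induction N with
  | zero =>
    intro es u hlen hne
    exact absurd (List.length_eq_zero_iff.1 (Nat.le_zero.1 hlen)) hne
  | succ N ih =>
    intro es u hlen hne hW hcl hodd
    set n := es.length with hn
    have hn0 : 0 < n := List.length_pos_iff.2 hne
    by_cases hinj : ∀ i j, i < j → j ≤ n → ¬(i = 0 ∧ j = n) →
        G.endv u (es.take i) ≠ G.endv u (es.take j)
    · -- no repeats: es is a genuine cycle (or tiny degenerate case)
      match hn3 : n, hn0 with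
      | 1, _ =>
        obtain ⟨e, rfl⟩ := List.length_eq_one_iff.1 hn.symm
        have ht : G.touches e u := hW.1
        have : G.other e u = u := hcl
        exact absurd this (other_ne hloop ht)
      | 2, _ =>
        obtain ⟨e1, e2, rfl⟩ := List.length_eq_two.1 hn.symm
        have ht1 : G.touches e1 u := hW.1
        have ht2 : G.touches e2 (G.other e1 u) := hW.2.1
        have hoth : G.other e2 (G.other e1 u) = u := hcl
        have heq : e1 = e2 := by
          apply hsimple
          rcases ends_or ht1 with h1 | h1 <;> rcases ends_or ht2 with h2 | h2 <;>
            rw [h1, h2, hoth]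
          · right; rfl
          · left; rfl
          · left; rfl
          · right; rfl
        exfalso
        apply hodd
        subst heq
        unfold npar
        by_cases hs : !G.sign e1 <;> simp [List.countP_cons, hs]
      | (m+3), _ =>
        obtain ⟨hcyc, hcnt⟩ := cycle_of_walk hloop hsimple hW hcl (by omega) (by
          rw [← hn]; exact hinj)
        exact ⟨{e | e ∈ es}, hcyc, by rw [hcnt]; exact hodd⟩
    · push_neg at hinj
      obtain ⟨i, j, hij, hjn, hnot, heq⟩ := hinj
      set a := es.take i with ha
      set b := (es.drop i).take (j - i) with hb
      set c := es.drop j with hc2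
      have htj : es.take j = a ++ b := by
        rw [ha, hb, ← List.take_add, show i + (j - i) = j by omega]
      have hes : es = (a ++ b) ++ c := by
        rw [← htj, hc2, List.take_append_drop]
      have hlb : b.length = j - i := by
        rw [hb]
        simp [List.length_take, List.length_drop]
        omega
      have hla : a.length = i := by
        rw [ha]; simp [List.length_take]; omega
      have hlc : c.length = n - j := by
        rw [hc2]; simp [List.length_drop, hn]
      -- walk decompositions
      have hWassoc : G.WalkAt u (a ++ (b ++ c)) := by
        rw [← List.append_assoc, ← hes]; exact hW
      have hW1 : G.WalkAt u a ∧ G.WalkAt (G.endv u a) (b ++ c) :=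
        (walkAt_append (G := G) (u := u) (es := a) (fs := b ++ c)).1 hWassoc
      have hW2 : G.WalkAt (G.endv u a) b ∧ G.WalkAt (G.endv (G.endv u a) b) c :=
        (walkAt_append (G := G)).1 hW1.2
      have hend_ab : G.endv (G.endv u a) b = G.endv u a := by
        rw [← endv_append, ← htj, ha, ← heq]
      -- middle closed walk b at (endv u a); outer closed walk (a ++ c) at u
      have hb_ne : b ≠ [] := by
        intro h
        rw [h] at hlb
        simp at hlb
        omega
      have hWb : G.WalkAt (G.endv u a) b := hW2.1
      have hWac : G.WalkAt u (a ++ c) := by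
        rw [walkAt_append]
        exact ⟨hW1.1, by rw [← hend_ab]; exact hW2.2⟩
      have hclb : G.endv (G.endv u a) b = G.endv u a := hend_ab
      have hclac : G.endv u (a ++ c) = u := by
        rw [endv_append, ← hend_ab, ← endv_append, ← endv_append, ← List.append_assoc, ← hes]
        exact hcl
      have hpar : G.npar es = G.npar b + G.npar (a ++ c) := by
        rw [hes, npar_append, npar_append, npar_append]
        omega
      have hac_ne : a ++ c ≠ [] := by
        intro h
        have := congrArg List.length h
        simp [hla, hlc] at this
        omega
      rcases Nat.even_or_odd (G.npar b) with hev | hod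
      · -- outer walk odd
        refine ih (a ++ c) u ?_ hac_ne hWac hclac ?_
        · have : (a ++ c).length = i + (n - j) := by simp [hla, hlc]
          omega
        · intro h
          exact hodd (by rw [hpar]; exact hev.add h)
      · refine ih b (G.endv u a) ?_ hb_ne hWb hclb ?_
        · omega
        · exact Nat.not_even_iff_odd.2 hod

lemma no_odd_closed
    (hsimple : ∀ e f : E, (G.ends e = G.ends f ∨ G.ends e = Prod.swap (G.ends f)) → e = f)
    (hbal : G.Balanced) (hW : G.WalkAt u es) (hcl : G.endv u es = u) : Even (G.npar es) := by
  by_contra hodd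
  rcases eq_or_ne es [] with rfl | hne2
  · exact hodd (by simp [npar])
  · obtain ⟨C, hC, hodd'⟩ := extract hloop hsimple es.length es u le_rfl hne2 hW hcl hodd
    exact hodd' (hbal C hC)

variable (G) in
def Reach (u v : V) : Prop := ∃ es, G.WalkAt u es ∧ G.endv u es = v

lemma reach_equiv : Equivalence (G.Reach) where
  refl u := ⟨[], trivial, rfl⟩
  symm := by
    rintro a b ⟨es, h1, h2⟩
    have h3 := walkAt_reverse hloop h1
    rw [h2] at h3
    exact ⟨es.reverse, h3.1, h3.2⟩
  trans := by
    rintro a b c ⟨es, h1, h2⟩ ⟨fs, h3, h4⟩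
    refine ⟨es ++ fs, ?_, ?_⟩
    · rw [walkAt_append, h2]
      exact ⟨h1, h3⟩
    · rw [endv_append, h2, h4]

lemma reach_parity
    (hsimple : ∀ e f : E, (G.ends e = G.ends f ∨ G.ends e = Prod.swap (G.ends f)) → e = f)
    (hbal : G.Balanced) {x : V} (h1 : G.WalkAt x es) (h2 : G.WalkAt x fs)
    (he : G.endv x es = G.endv x fs) : (Even (G.npar es) ↔ Even (G.npar fs)) := by
  have h3 := walkAt_reverse hloop h2
  have hWc : G.WalkAt x (es ++ fs.reverse) := by
    rw [walkAt_append, he]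
    exact ⟨h1, h3.1⟩
  have hclc : G.endv x (es ++ fs.reverse) = x := by
    rw [endv_append, he]
    exact h3.2
  have := no_odd_closed hloop hsimple hbal hWc hclc
  rw [npar_append, npar_reverse] at this
  exact Nat.even_add.1 this

end SignedGraph


noncomputable def codeSupport {ι F : Type*} [Field F] (D : Submodule F (ι → F)) : Set ι :=
  {i | ∃ v ∈ D, v i ≠ 0}

noncomputable def GHW {ι F : Type*} [Field F] (C : Submodule F (ι → F)) (r : ℕ) : ℕ :=
  sInf {n | ∃ D : Submodule F (ι → F), D ≤ C ∧ Module.finrank F D = r ∧ (codeSupport D).ncard = n}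

noncomputable def dotL {ι F : Type*} [Fintype ι] [Field F] (v : ι → F) : (ι → F) →ₗ[F] F where
  toFun w := ∑ i, v i * w i
  map_add' a b := by simp [mul_add, Finset.sum_add_distrib]
  map_smul' c a := by simp [Finset.mul_sum, mul_left_comm, smul_eq_mul]

noncomputable def dualCode {ι F : Type*} [Fintype ι] [Field F]
    (C : Submodule F (ι → F)) : Submodule F (ι → F) :=
  ⨅ v ∈ C, LinearMap.ker (dotL v)

def NonRedundant {α : Type*} {r : ℕ} (C : Fin r → Set α) : Prop :=
  ∀ j, (⋃ i, ⋃ (_ : i ≠ j), C i) ⊂ ⋃ i, C i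

open SignedGraph

theorem stmt16 {V E : Type*} [Fintype V] [Fintype E] (G : SignedGraph V E)
    (hloop : ∀ e, (G.ends e).1 ≠ (G.ends e).2)
    (hsimple : ∀ e f, (G.ends e = G.ends f ∨ G.ends e = Prod.swap (G.ends f)) → e = f) :
    G.Balanced ↔ ∃ W : V → Bool,
      ∀ e, (G.sign e = false ↔ W (G.ends e).1 ≠ W (G.ends e).2) := by
  classical
  constructor
  · intro hbal
    letI s : Setoid V := ⟨G.Reach, reach_equiv hloop⟩
    let rep : V → V := fun v => (⟦v⟧ : Quotient s).out
    have hrep : ∀ v, G.Reach (rep v) v := fun v => Quotient.exact (s := s) (Quotient.out_eq (⟦v⟧ : Quotient s))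
    have hrepeq : ∀ a b, G.Reach a b → rep a = rep b := fun a b h =>
      congrArg Quotient.out (Quotient.sound h)
    set W : V → Bool := fun v =>
      decide (∃ es, G.WalkAt (rep v) es ∧ G.endv (rep v) es = v ∧ ¬ Even (G.npar es)) with hWdef
    have hWchar : ∀ v ws, G.WalkAt (rep v) ws → G.endv (rep v) ws = v →
        (W v = true ↔ ¬ Even (G.npar ws)) := by
      intro v ws h1 h2
      rw [hWdef]
      simp only [decide_eq_true_eq]
      constructor
      · rintro ⟨fs, hf1, hf2, hf3⟩ hev
        exact hf3 ((reach_parity hloop hsimple hbal hf1 h1 (hf2.trans h2.symm)).2 hev)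
      · intro h
        exact ⟨ws, h1, h2, h⟩
    refine ⟨W, fun e => ?_⟩
    have ht1 : G.touches e (G.ends e).1 := Or.inl rfl
    have hoth : G.other e (G.ends e).1 = (G.ends e).2 := if_pos rfl
    have hwalk1 : G.WalkAt (G.ends e).1 [e] := ⟨ht1, trivial⟩
    have hwalk2 : G.endv (G.ends e).1 [e] = (G.ends e).2 := by
      simpa [SignedGraph.endv] using hoth
    have hreach : G.Reach (G.ends e).1 (G.ends e).2 := ⟨[e], hwalk1, hwalk2⟩
    have hrr : rep (G.ends e).2 = rep (G.ends e).1 := (hrepeq _ _ hreach).symm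
    obtain ⟨ws, hws1, hws2⟩ := hrep (G.ends e).1
    have hws1' : G.WalkAt (rep (G.ends e).2) (ws ++ [e]) := by
      rw [hrr, walkAt_append, hws2]
      exact ⟨hws1, hwalk1⟩
    have hws2' : G.endv (rep (G.ends e).2) (ws ++ [e]) = (G.ends e).2 := by
      rw [hrr, endv_append, hws2]
      exact hwalk2
    have hc1 := hWchar (G.ends e).1 ws hws1 hws2
    have hc2 := hWchar (G.ends e).2 (ws ++ [e]) hws1' hws2'
    rw [npar_append] at hc2
    by_cases hs : G.sign e = false
    · have hnp : G.npar [e] = 1 := by simp [SignedGraph.npar, hs]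
      rw [hnp] at hc2
      refine ⟨fun _ => ?_, fun _ => hs⟩
      rcases Nat.even_or_odd (G.npar ws) with hA | hA
      · have h1f : W (G.ends e).1 = false := by
          have : ¬ (W (G.ends e).1 = true) := fun h => (hc1.1 h) hA
          simpa using this
        have h2t : W (G.ends e).2 = true := hc2.2 (by simp [Nat.even_add_one, hA])
        simp [h1f, h2t]
      · have h1t : W (G.ends e).1 = true := hc1.2 (Nat.not_even_iff_odd.2 hA)
        have h2f : W (G.ends e).2 = false := by
          have : ¬ (W (G.ends e).2 = true) := fun h =>
            (hc2.1 h) (by simp [Nat.even_add_one, Nat.not_even_iff_odd.2 hA])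
          simpa using this
        simp [h1t, h2f]
    · have hnp : G.npar [e] = 0 := by
        have hst : G.sign e = true := by
          cases hsv : G.sign e
          · exact absurd hsv hs
          · rfl
        simp [SignedGraph.npar, hst]
      rw [hnp, Nat.add_zero] at hc2
      have heqW : W (G.ends e).1 = W (G.ends e).2 :=
        Bool.eq_iff_iff.2 (hc1.trans hc2.symm)
      simp [hs, heqW]
  · rintro ⟨W, hWp⟩ C hC
    obtain ⟨hCne, hconn, hdegv⟩ := hC
    have hCF : C.Finite := Set.toFinite C
    set F := hCF.toFinset with hFdef
    have hFC : (↑F : Set E) = C := hCF.coe_toFinset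
    set w : V → ZMod 2 := fun v => if W v then 1 else 0 with hwdef
    have hdegF : ∀ v, G.deg C v = ∑ e ∈ F,
        ((if (G.ends e).1 = v then 1 else 0) + (if (G.ends e).2 = v then 1 else 0)) := by
      intro v
      show (∑ᶠ e ∈ C, ((if (G.ends e).1 = v then 1 else 0) + (if (G.ends e).2 = v then 1 else 0))) = _
      rw [← hFC, finsum_mem_coe_finset]
    have hdeg0 : ∀ v, v ∉ G.verts C → G.deg C v = 0 := by
      intro v hv
      rw [hdegF]
      refine Finset.sum_eq_zero fun e he => ?_
      have heC : e ∈ C := by rw [← hFC]; exact he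
      have h1 : (G.ends e).1 ≠ v := fun h => hv ⟨e, heC, Or.inl h⟩
      have h2 : (G.ends e).2 ≠ v := fun h => hv ⟨e, heC, Or.inr h⟩
      simp [h1, h2]
    have hkey : ∀ e, (if G.sign e = false then (1 : ZMod 2) else 0)
        = w (G.ends e).1 + w (G.ends e).2 := by
      intro e
      by_cases h1 : W (G.ends e).1 = true <;> by_cases h2 : W (G.ends e).2 = true
      · have hsn : ¬ (G.sign e = false) := fun h => (hWp e).1 h (h1.trans h2.symm)
        simp only [hwdef, if_neg hsn, h1, h2, if_true]
        decide
      · have h2f : W (G.ends e).2 = false := by revert h2; cases W (G.ends e).2 <;> simp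
        have hsy : G.sign e = false := (hWp e).2 (fun hq => by rw [h1, h2f] at hq; cases hq)
        simp [hwdef, h1, h2f, hsy]
      · have h1f : W (G.ends e).1 = false := by revert h1; cases W (G.ends e).1 <;> simp
        have hsy : G.sign e = false := (hWp e).2 (fun hq => by rw [h2, h1f] at hq; cases hq)
        simp [hwdef, h2, h1f, hsy]
      · have h1f : W (G.ends e).1 = false := by revert h1; cases W (G.ends e).1 <;> simp
        have h2f : W (G.ends e).2 = false := by revert h2; cases W (G.ends e).2 <;> simp
        have hsn : ¬ (G.sign e = false) := fun h => (hWp e).1 h (h1f.trans h2f.symm)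
        rw [if_neg hsn]
        simp [hwdef, h1f, h2f]
    have hneg : ((G.negCount C : ZMod 2)) = ∑ e ∈ F, (if G.sign e = false then (1:ZMod 2) else 0) := by
      have hset : {e ∈ C | G.sign e = false} = (↑(F.filter (fun e => G.sign e = false)) : Set E) := by
        ext e
        simp [hFdef, Set.mem_setOf_eq]
      rw [SignedGraph.negCount, hset, Set.ncard_coe_finset, Finset.card_filter]
      push_cast
      exact Finset.sum_congr rfl fun e _ => by split <;> simp
    have honedge : ∀ e, w (G.ends e).1 + w (G.ends e).2
        = ∑ v : V, (((if (G.ends e).1 = v then (1:ZMod 2) else 0)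
            + (if (G.ends e).2 = v then 1 else 0)) * w v) := by
      intro e
      have hsplit : ∀ v : V, ((if (G.ends e).1 = v then (1:ZMod 2) else 0)
            + (if (G.ends e).2 = v then 1 else 0)) * w v
          = (if (G.ends e).1 = v then w v else 0) + (if (G.ends e).2 = v then w v else 0) := by
        intro v
        rw [add_mul]
        congr 1 <;> split <;> simp
      rw [Finset.sum_congr rfl fun v _ => hsplit v, Finset.sum_add_distrib,
        Finset.sum_ite_eq, Finset.sum_ite_eq]
      simp
    have hzero : ∑ e ∈ F, (w (G.ends e).1 + w (G.ends e).2) = 0 := by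
      have hswap : ∑ e ∈ F, (w (G.ends e).1 + w (G.ends e).2)
          = ∑ v : V, ((G.deg C v : ZMod 2) * w v) := by
        rw [Finset.sum_congr rfl fun e _ => honedge e, Finset.sum_comm]
        refine Finset.sum_congr rfl fun v _ => ?_
        rw [← Finset.sum_mul, hdegF v]
        push_cast
        ring
      rw [hswap]
      refine Finset.sum_eq_zero fun v _ => ?_
      by_cases hv : v ∈ G.verts C
      · rw [hdegv v hv]
        have h2 : ((2 : ℕ) : ZMod 2) = 0 := by decide
        rw [h2, zero_mul]
      · rw [hdeg0 v hv]
        simp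
    have hfin : ((G.negCount C : ZMod 2)) = 0 := by
      rw [hneg, Finset.sum_congr rfl fun e _ => hkey e, hzero]
    exact even_iff_two_dvd.2 ((ZMod.natCast_eq_zero_iff _ 2).1 hfin)
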